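/- Let P be a finite poset and R a consistent restriction function on P. Every meet-irreducible element f of the lattice Inc_R(P) has exactly one raisable element p(f), and f(p(f)) ≠ max R(p(f)); moreover the map f ↦ (p(f), f(p(f))) is a bijection from the set of meet-irreducible elements of Inc_R(P) onto the set of pairs {(p,k) : p ∈ P, k ∈ R(p), k ≠ max R(p)}. -/

import Mathlib

/-- An increasing labeling of the finite poset `P` with respect to the
restriction function `R`. -/
def IncLabel {P : Type*} [PartialOrder P] (R : P → Finset ℤ) (f : P → ℤ) : Prop :=
  (∀ p, f p ∈ R p) ∧ ∀ ⦃p₁ p₂ : P⦄, p₁ < p₂ → f p₁ < f p₂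

/-- `R` is consistent: minima and maxima of the label sets strictly increase
along covering relations. -/
def Consistent {P : Type*} [PartialOrder P] (R : P → Finset ℤ)
    (hR : ∀ p, (R p).Nonempty) : Prop :=
  ∀ x y : P, x ⋖ y →
    (R x).min' (hR x) < (R y).min' (hR y) ∧ (R x).max' (hR x) < (R y).max' (hR y)

/-- An element `p` is raisable in `f` if its value can be strictly increased,
keeping all other values fixed, while remaining an increasing labeling. -/
def Raisable {P : Type*} [PartialOrder P] (R : P → Finset ℤ) (f : P → ℤ) (p : P) : Prop :=
  ∃ g : P → ℤ, IncLabel R g ∧ f p < g p ∧ ∀ p' : P, p' ≠ p → f p' = g p'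

/-- `f` is a meet-irreducible element of the lattice `Inc_R(P)` (ordered
pointwise, with meet given by pointwise minimum). -/
def MeetIrred {P : Type*} [PartialOrder P] (R : P → Finset ℤ) (f : P → ℤ) : Prop :=
  IncLabel R f ∧ ¬ (∀ g : P → ℤ, IncLabel R g → ∀ p, g p ≤ f p) ∧
  ∀ a b : P → ℤ, IncLabel R a → IncLabel R b →
    (f = fun p => min (a p) (b p)) → f = a ∨ f = b


namespace Stmt5Aux
attribute [local instance] Classical.propDecidable

lemma covlt {P : Type*} [Fintype P] [PartialOrder P] {F : P → ℤ}
    (hF : ∀ x y : P, x ⋖ y → F x < F y) : ∀ {x y : P}, x < y → F x < F y := by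
  intro x y
  induction y using WellFoundedLT.induction with
  | ind y ih =>
    intro hxy
    obtain ⟨z, hxz, hzy⟩ := exists_le_covBy_of_lt hxy
    rcases eq_or_lt_of_le hxz with rfl | h
    · exact hF _ _ hzy
    · exact (ih z hzy.lt h).trans (hF _ _ hzy)

variable {P : Type*} [Fintype P] [PartialOrder P] {R : P → Finset ℤ} {hR : ∀ p, (R p).Nonempty}

section
variable (hcons : Consistent R hR)
include hcons

lemma min_lt {x y : P} (h : x < y) : (R x).min' (hR x) < (R y).min' (hR y) :=
  covlt (fun a b hab => (hcons a b hab).1) h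

lemma max_lt {x y : P} (h : x < y) : (R x).max' (hR x) < (R y).max' (hR y) :=
  covlt (fun a b hab => (hcons a b hab).2) h

lemma inc_fmax : IncLabel R (fun q => (R q).max' (hR q)) :=
  ⟨fun q => (R q).max'_mem (hR q), fun _ _ h => max_lt hcons h⟩

/-- the labeling with value k at p, min below p, max elsewhere -/
lemma inc_g0 (p : P) (k : ℤ) (hk : k ∈ R p) :
    IncLabel R (fun q => if q = p then k else if q < p then (R q).min' (hR q)
      else (R q).max' (hR q)) := by
  constructor
  · intro q
    dsimp only
    split
    · subst ‹q = p›; exact hk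
    · split
      · exact (R q).min'_mem (hR q)
      · exact (R q).max'_mem (hR q)
  · intro x y hxy
    dsimp only
    by_cases hxp : x = p
    · subst hxp
      rw [if_pos rfl, if_neg (ne_of_gt hxy), if_neg (asymm hxy)]
      exact lt_of_le_of_lt ((R x).le_max' k hk) (max_lt hcons hxy)
    · rw [if_neg hxp]
      by_cases hlt : x < p
      · rw [if_pos hlt]
        by_cases hyp : y = p
        · subst hyp
          rw [if_pos rfl]
          exact lt_of_lt_of_le (min_lt hcons hlt) ((R y).min'_le k hk)
        · rw [if_neg hyp]
          by_cases hylt : y < p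
          · rw [if_pos hylt]; exact min_lt hcons hxy
          · rw [if_neg hylt]
            exact lt_of_le_of_lt ((R x).min'_le _ ((R x).max'_mem (hR x)))
              (max_lt hcons hxy)
      · have hyp : y ≠ p := by rintro rfl; exact hlt hxy
        have hynp : ¬ y < p := fun h => hlt (hxy.trans h)
        rw [if_neg hlt, if_neg hyp, if_neg hynp]
        exact max_lt hcons hxy

end

/-- The maximum increasing labeling with value ≤ k at p. -/
noncomputable def MaxLab (R : P → Finset ℤ) (p : P) (k : ℤ) : P → ℤ :=
  fun q => sSup ((fun h => h q) '' {h | IncLabel R h ∧ h p ≤ k})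

section
variable (hcons : Consistent R hR) {p : P} {k : ℤ} (hk : k ∈ R p)
include hcons hk

lemma maxlab_spec :
    IncLabel R (MaxLab R p k) ∧ MaxLab R p k p = k ∧
    (∀ h : P → ℤ, IncLabel R h → h p ≤ k → ∀ q, h q ≤ MaxLab R p k q) ∧
    (∀ q : P, ¬ q ≤ p → MaxLab R p k q = (R q).max' (hR q)) := by
  set g0 : P → ℤ := fun q => if q = p then k else if q < p then (R q).min' (hR q)
      else (R q).max' (hR q) with hg0
  have hg0inc : IncLabel R g0 := inc_g0 hcons p k hk
  have hg0S : g0 ∈ {h | IncLabel R h ∧ h p ≤ k} := ⟨hg0inc, by simp [hg0]⟩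
  have hne : ∀ q : P, ((fun h : P → ℤ => h q) '' {h | IncLabel R h ∧ h p ≤ k}).Nonempty :=
    fun q => ⟨g0 q, g0, hg0S, rfl⟩
  have hfin : ∀ q : P, ((fun h : P → ℤ => h q) '' {h | IncLabel R h ∧ h p ≤ k}).Finite := by
    intro q
    apply Set.Finite.subset (R q).finite_toSet
    rintro v ⟨h, hh, rfl⟩
    exact hh.1.1 q
  have hmem : ∀ q : P, ∃ h : P → ℤ, (IncLabel R h ∧ h p ≤ k) ∧ h q = MaxLab R p k q := by
    intro q
    have := Set.Nonempty.csSup_mem (hne q) (hfin q)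
    obtain ⟨h, hh, hq⟩ := this
    exact ⟨h, hh, hq⟩
  have hle : ∀ h : P → ℤ, IncLabel R h → h p ≤ k → ∀ q, h q ≤ MaxLab R p k q := by
    intro h hinc hpk q
    exact le_csSup (hfin q).bddAbove ⟨h, ⟨hinc, hpk⟩, rfl⟩
  have hinc : IncLabel R (MaxLab R p k) := by
    constructor
    · intro q
      obtain ⟨h, hh, hq⟩ := hmem q
      rw [← hq]; exact hh.1.1 q
    · intro x y hxy
      obtain ⟨h, hh, hq⟩ := hmem x
      calc MaxLab R p k x = h x := hq.symm
        _ < h y := hh.1.2 hxy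
        _ ≤ MaxLab R p k y := hle h hh.1 hh.2 y
  refine ⟨hinc, ?_, hle, ?_⟩
  · obtain ⟨h, hh, hq⟩ := hmem p
    have h1 : MaxLab R p k p ≤ k := hq ▸ hh.2
    have h2 : k ≤ MaxLab R p k p := by
      have := hle g0 hg0inc (by simp [hg0]) p
      simpa [hg0] using this
    exact le_antisymm h1 h2
  · intro q hq
    have h1 : MaxLab R p k q ≤ (R q).max' (hR q) := (R q).le_max' _ (hinc.1 q)
    have h2 : (R q).max' (hR q) ≤ MaxLab R p k q := by
      have hle' := hle g0 hg0inc (by simp [hg0]) q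
      have hqp : q ≠ p := fun h => hq (h ▸ le_refl p)
      have hqlt : ¬ q < p := fun h => hq h.le
      simpa [hg0, hqp, hqlt] using hle'
    exact le_antisymm h1 h2

lemma maxlab_raisable (hkmax : k ≠ (R p).max' (hR p)) :
    Raisable R (MaxLab R p k) p := by
  obtain ⟨hMinc, hMp, hMle, hMmax⟩ := maxlab_spec hcons hk
  have hklt : k < (R p).max' (hR p) := lt_of_le_of_ne ((R p).le_max' k hk) hkmax
  set F : Finset ℤ := (R p).filter (fun v => k < v) with hF
  have hFne : F.Nonempty := ⟨(R p).max' (hR p), by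
    simp [hF, Finset.mem_filter, (R p).max'_mem (hR p), hklt]⟩
  set k' : ℤ := F.min' hFne with hk'
  have hk'mem : k' ∈ R p := (Finset.mem_filter.mp (F.min'_mem hFne)).1
  have hkk' : k < k' := (Finset.mem_filter.mp (F.min'_mem hFne)).2
  refine ⟨fun q => if q = p then k' else MaxLab R p k q, ⟨?_, ?_⟩, ?_, ?_⟩
  · intro q
    dsimp only; split
    · subst ‹q = p›; exact hk'mem
    · exact hMinc.1 q
  · intro x y hxy
    dsimp only
    by_cases hxp : x = p
    · have hpy : p < y := hxp ▸ hxy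
      have hyne : y ≠ p := ne_of_gt hpy
      have hynle : ¬ y ≤ p := fun h => absurd (lt_of_lt_of_le hpy h) (lt_irrefl p)
      rw [if_pos hxp, if_neg hyne, hMmax y hynle]
      exact lt_of_le_of_lt ((R p).le_max' k' hk'mem) (max_lt hcons hpy)
    · rw [if_neg hxp]
      by_cases hyp : y = p
      · rw [if_pos hyp]
        exact lt_of_lt_of_le (lt_of_lt_of_eq (hMinc.2 hxy) (by rw [hyp, hMp])) hkk'.le
      · rw [if_neg hyp]; exact hMinc.2 hxy
  · simp [hMp, hkk']
  · intro q hq; simp [hq]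

lemma maxlab_meetIrred (hkmax : k ≠ (R p).max' (hR p)) :
    MeetIrred R (MaxLab R p k) := by
  obtain ⟨hMinc, hMp, hMle, hMmax⟩ := maxlab_spec hcons hk
  refine ⟨hMinc, ?_, ?_⟩
  · intro hall
    have := hall (fun q => (R q).max' (hR q)) (inc_fmax hcons) p
    rw [hMp] at this
    exact hkmax (le_antisymm ((R p).le_max' k hk) this)
  · intro a b ha hb hab
    have hmin : min (a p) (b p) = k := by rw [← hMp, hab]
    rcases min_cases (a p) (b p) with ⟨h1, _⟩ | ⟨h1, _⟩
    · left
      funext q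
      refine le_antisymm ?_ (hMle a ha (le_of_eq (h1.symm.trans hmin)) q)
      rw [hab]; exact min_le_left _ _
    · right
      funext q
      refine le_antisymm ?_ (hMle b hb (le_of_eq (h1.symm.trans hmin)) q)
      rw [hab]; exact min_le_right _ _

end

/-- A meet-irreducible labeling raisable at p equals MaxLab at its value. -/
lemma meetIrred_eq_maxlab (hcons : Consistent R hR) {f : P → ℤ} {p : P}
    (hf : MeetIrred R f) (hrais : Raisable R f p) : f = MaxLab R p (f p) := by
  obtain ⟨finc, _, fmi⟩ := hf
  obtain ⟨f', hf'inc, hf'p, hf'eq⟩ := hrais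
  obtain ⟨hMinc, hMp, hMle, hMmax⟩ := maxlab_spec hcons (finc.1 p)
  have key : f = fun q => min (f' q) (MaxLab R p (f p) q) := by
    funext q
    by_cases hq : q = p
    · subst hq
      rw [hMp, min_eq_right hf'p.le]
    · rw [← hf'eq q hq, min_eq_left (hMle f finc le_rfl q)]
  rcases fmi f' (MaxLab R p (f p)) hf'inc hMinc key with h | h
  · exact absurd (congrFun h p) (ne_of_lt hf'p)
  · exact h

end Stmt5Aux

/-- Every meet-irreducible increasing labeling `f` has exactly one raisable
element `p(f)`, its value there is not `max R(p(f))`, and the assignment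
`f ↦ (p(f), f(p(f)))` is a bijection from the set of meet irreducibles of
`Inc_R(P)` onto the pairs `(p,k)` with `k ∈ R(p)`, `k ≠ max R(p)`. -/
theorem stmt5 {P : Type*} [Fintype P] [PartialOrder P]
    (R : P → Finset ℤ) (hR : ∀ p, (R p).Nonempty) (hcons : Consistent R hR) :
    (∀ f : P → ℤ, MeetIrred R f → ∃! p : P, Raisable R f p) ∧
    (∀ f : P → ℤ, ∀ p : P, MeetIrred R f → Raisable R f p →
      f p ∈ R p ∧ f p ≠ (R p).max' (hR p)) ∧
    (∀ f g : P → ℤ, ∀ p : P, MeetIrred R f → MeetIrred R g →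
      Raisable R f p → Raisable R g p → f p = g p → f = g) ∧
    (∀ p : P, ∀ k : ℤ, k ∈ R p → k ≠ (R p).max' (hR p) →
      ∃ f : P → ℤ, MeetIrred R f ∧ Raisable R f p ∧ f p = k) := by
  classical
  refine ⟨?_, ?_, ?_, ?_⟩
  · -- unique raisable element
    intro f hf
    obtain ⟨finc, fnottop, fmi⟩ := hf
    have huniq : ∀ p q : P, Raisable R f p → Raisable R f q → p = q := by
      intro p q hp hq
      by_contra hne
      obtain ⟨g1, hg1, hg1p, hg1eq⟩ := hp
      obtain ⟨g2, hg2, hg2q, hg2eq⟩ := hq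
      have hfeq : f = fun r => min (g1 r) (g2 r) := by
        funext r
        by_cases h1 : r = p
        · have hrq : r ≠ q := by rw [h1]; exact hne
          rw [← hg2eq r hrq, h1]
          exact (min_eq_right hg1p.le).symm
        · by_cases h2 : r = q
          · have hrp : r ≠ p := by rw [h2]; exact Ne.symm hne
            rw [← hg1eq r hrp, h2]
            exact (min_eq_left hg2q.le).symm
          · rw [← hg1eq r h1, ← hg2eq r h2]
            exact (min_self _).symm
      rcases fmi g1 g2 hg1 hg2 hfeq with h | h
      · exact absurd (congrFun h p) (ne_of_lt hg1p)
      · exact absurd (congrFun h q) (ne_of_lt hg2q)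
    have hex : ∃ p, Raisable R f p := by
      push_neg at fnottop
      obtain ⟨g, hg, p0, hp0⟩ := fnottop
      have hp0' : f p0 < (R p0).max' (hR p0) :=
        lt_of_lt_of_le hp0 ((R p0).le_max' _ (hg.1 p0))
      obtain ⟨p, hpmem, hpmax⟩ : ∃ i ∈ (Finset.univ.filter fun q => f q < (R q).max' (hR q)),
          ∀ x ∈ (Finset.univ.filter fun q => f q < (R q).max' (hR q)), ¬ i < x := by
        obtain ⟨i, hi⟩ := Finset.exists_maximal
          (s := Finset.univ.filter fun q => f q < (R q).max' (hR q)) ⟨p0, by simpa using hp0'⟩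
        exact ⟨i, hi.1, fun x hx hlt => hlt.not_ge (hi.2 hx hlt.le)⟩
      have hfp : f p < (R p).max' (hR p) := by simpa using hpmem
      have habove : ∀ y, p < y → f y = (R y).max' (hR y) := by
        intro y hy
        by_contra h
        exact hpmax y (by simpa using lt_of_le_of_ne ((R y).le_max' _ (finc.1 y)) h) hy
      refine ⟨p, fun q => if q = p then (R p).max' (hR p) else f q, ⟨?_, ?_⟩, ?_, ?_⟩
      · intro q; dsimp only; split
        · subst ‹q = p›; exact (R q).max'_mem (hR q)
        · exact finc.1 q
      · intro x y hxy; dsimp only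
        by_cases hxp : x = p
        · have hpy : p < y := hxp ▸ hxy
          rw [if_pos hxp, if_neg (ne_of_gt hpy), habove y hpy]
          exact Stmt5Aux.max_lt hcons hpy
        · rw [if_neg hxp]
          by_cases hyp : y = p
          · rw [if_pos hyp]
            have hxpl : x < p := hyp ▸ hxy
            exact lt_of_le_of_lt ((R x).le_max' _ (finc.1 x)) (Stmt5Aux.max_lt hcons hxpl)
          · rw [if_neg hyp]; exact finc.2 hxy
      · simpa using hfp
      · intro q hq; simp [hq]
    obtain ⟨p, hp⟩ := hex
    exact ⟨p, hp, fun q hq => huniq q p hq hp⟩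
  · -- value is in R p and not the max
    intro f p hf hrais
    obtain ⟨g, hginc, hgp, _⟩ := hrais
    refine ⟨hf.1.1 p, fun h => ?_⟩
    exact absurd (h ▸ hgp) (not_lt.mpr ((R p).le_max' _ (hginc.1 p)))
  · -- injectivity
    intro f g p hf hg hrf hrg hfg
    have h1 := Stmt5Aux.meetIrred_eq_maxlab hcons hf hrf
    have h2 := Stmt5Aux.meetIrred_eq_maxlab hcons hg hrg
    rw [h1, hfg]
    exact h2.symm
  · -- surjectivity
    intro p k hk hkmax
    exact ⟨Stmt5Aux.MaxLab R p k, Stmt5Aux.maxlab_meetIrred hcons hk hkmax,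
      Stmt5Aux.maxlab_raisable hcons hk hkmax, (Stmt5Aux.maxlab_spec hcons hk).2.1⟩
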